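/- Per-block coercivity of the Bellman-error loss under full column rank. Fix d ∈ {1, …, D} and factor matrices Q_{d'} for all d' ≠ d, and suppose the columns of the coefficient matrix C̄_d corresponding to the free entries of the d-th factor (all columns when d < D; the columns (j, k) with j ∈ {1, …, H} when d = D) are linearly independent. Then the map X ↦ L(Q_1, …, Q_{d−1}, X, Q_{d+1}, …, Q_D) is coercive in the free entries of X: for every sequence of admissible matrices X_n with ‖X_n‖_F → ∞, one has L(Q_1, …, X_n, …, Q_D) → ∞; equivalently, all its sublevel sets are bounded. -/

import Mathlib

namespace FHMDP

noncomputable section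

/-- Mode index set `{1, …, D}` with `D = Ds + Da + 1`: state modes, action modes,
and a final time mode. -/
abbrev Mode (Ds Da : ℕ) : Type := Fin Ds ⊕ Fin Da ⊕ Unit

/-- The last (time) mode `d = D`. -/
abbrev tmode (Ds Da : ℕ) : Mode Ds Da := Sum.inr (Sum.inr ())

/-- The index set `D_d` of each mode. -/
def Dset {Ds Da : ℕ} (Sset : Fin Ds → Type) (Aset : Fin Da → Type) (H : ℕ) :
    Mode Ds Da → Type
  | Sum.inl i => Sset i
  | Sum.inr (Sum.inl j) => Aset j
  | Sum.inr (Sum.inr _) => Fin (H + 1)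

instance {Ds Da : ℕ} {Sset : Fin Ds → Type} {Aset : Fin Da → Type} {H : ℕ}
    [∀ i, Fintype (Sset i)] [∀ j, Fintype (Aset j)] :
    ∀ m : Mode Ds Da, Fintype (Dset Sset Aset H m)
  | Sum.inl i => inferInstanceAs (Fintype (Sset i))
  | Sum.inr (Sum.inl j) => inferInstanceAs (Fintype (Aset j))
  | Sum.inr (Sum.inr _) => inferInstanceAs (Fintype (Fin (H + 1)))

instance {Ds Da : ℕ} {Sset : Fin Ds → Type} {Aset : Fin Da → Type} {H : ℕ}
    [∀ i, DecidableEq (Sset i)] [∀ j, DecidableEq (Aset j)] :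
    ∀ m : Mode Ds Da, DecidableEq (Dset Sset Aset H m)
  | Sum.inl i => inferInstanceAs (DecidableEq (Sset i))
  | Sum.inr (Sum.inl j) => inferInstanceAs (DecidableEq (Aset j))
  | Sum.inr (Sum.inr _) => inferInstanceAs (DecidableEq (Fin (H + 1)))

/-- The multi-index `ι(s, a, h)` of a state-action-time triplet. -/
def idx {Ds Da : ℕ} {Sset : Fin Ds → Type} {Aset : Fin Da → Type} {H : ℕ}
    (s : ∀ i, Sset i) (a : ∀ j, Aset j) (h : Fin (H + 1)) :
    ∀ m : Mode Ds Da, Dset Sset Aset H m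
  | Sum.inl i => s i
  | Sum.inr (Sum.inl j) => a j
  | Sum.inr (Sum.inr _) => h

/-- A factor collection `Q = (Q_1, …, Q_D)`. -/
abbrev Fac {Ds Da : ℕ} (Sset : Fin Ds → Type) (Aset : Fin Da → Type) (H K : ℕ) : Type :=
  ∀ m : Mode Ds Da, Matrix (Dset Sset Aset H m) (Fin K) ℝ

/-- The entry `[[Q]](s, a, h)` of the PARAFAC tensor of a factor collection. -/
def parafac {Ds Da H K : ℕ} {Sset : Fin Ds → Type} {Aset : Fin Da → Type}
    (Q : Fac Sset Aset H K) (s : ∀ i, Sset i) (a : ∀ j, Aset j) (h : Fin (H + 1)) : ℝ :=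
  ∑ k : Fin K, ∏ m : Mode Ds Da, Q m (idx s a h m) k

/-- The Bellman error `δ_Q(s, a, h)` for `h ∈ {1, …, H}` (zero-indexed `h : Fin H`). -/
def bellErr {Ds Da H K : ℕ} {Sset : Fin Ds → Type} {Aset : Fin Da → Type}
    [∀ i, Fintype (Sset i)]
    (P : (∀ i, Sset i) → (∀ j, Aset j) → (∀ i, Sset i) → ℝ)
    (R : (∀ i, Sset i) → (∀ j, Aset j) → ℝ)
    (π : Fin (H + 1) → (∀ i, Sset i) → (∀ j, Aset j))
    (Q : Fac Sset Aset H K) (s : ∀ i, Sset i) (a : ∀ j, Aset j) (h : Fin H) : ℝ :=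
  R s a + (∑ s' : ∀ i, Sset i, P s a s' * parafac Q s' (π h.succ s') h.succ)
    - parafac Q s a h.castSucc

/-- The Bellman-error loss `L(Q)`. -/
def Loss {Ds Da H K : ℕ} {Sset : Fin Ds → Type} {Aset : Fin Da → Type}
    [∀ i, Fintype (Sset i)] [∀ j, Fintype (Aset j)]
    (P : (∀ i, Sset i) → (∀ j, Aset j) → (∀ i, Sset i) → ℝ)
    (R : (∀ i, Sset i) → (∀ j, Aset j) → ℝ)
    (π : Fin (H + 1) → (∀ i, Sset i) → (∀ j, Aset j))
    (Q : Fac Sset Aset H K) : ℝ :=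
  (1 / (H : ℝ)) * ∑ h : Fin H, ∑ s : ∀ i, Sset i, ∑ a : ∀ j, Aset j,
    (bellErr P R π Q s a h) ^ 2

/-- `Φ^Q_d[(s, a, h), (j, k)]`. -/
def Phi {Ds Da H K : ℕ} {Sset : Fin Ds → Type} {Aset : Fin Da → Type}
    [∀ i, DecidableEq (Sset i)] [∀ j, DecidableEq (Aset j)]
    (Q : Fac Sset Aset H K) (d : Mode Ds Da)
    (s : ∀ i, Sset i) (a : ∀ j, Aset j) (h : Fin (H + 1))
    (j : Dset Sset Aset H d) (k : Fin K) : ℝ :=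
  (if idx s a h d = j then (1 : ℝ) else 0) *
    ∏ m ∈ Finset.univ.erase d, Q m (idx s a h m) k

/-- The coefficient matrix `C̄_d[(s, a, h), (j, k)]` (independent of the `d`-th factor). -/
def Cbar {Ds Da H K : ℕ} {Sset : Fin Ds → Type} {Aset : Fin Da → Type}
    [∀ i, Fintype (Sset i)] [∀ i, DecidableEq (Sset i)] [∀ j, DecidableEq (Aset j)]
    (P : (∀ i, Sset i) → (∀ j, Aset j) → (∀ i, Sset i) → ℝ)
    (π : Fin (H + 1) → (∀ i, Sset i) → (∀ j, Aset j))
    (Q : Fac Sset Aset H K) (d : Mode Ds Da)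
    (s : ∀ i, Sset i) (a : ∀ j, Aset j) (h : Fin H)
    (j : Dset Sset Aset H d) (k : Fin K) : ℝ :=
  (∑ s' : ∀ i, Sset i, P s a s' * Phi Q d s' (π h.succ s') h.succ j k)
    - Phi Q d s a h.castSucc j k

/-- Free row indices of the `d`-th factor: every row for `d < D`, and all rows except
the last (time step `H+1`) for the time mode `d = D`. -/
def FreeIdx {Ds Da : ℕ} {Sset : Fin Ds → Type} {Aset : Fin Da → Type} {H : ℕ} :
    ∀ d : Mode Ds Da, Dset Sset Aset H d → Prop
  | Sum.inl _, _ => True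
  | Sum.inr (Sum.inl _), _ => True
  | Sum.inr (Sum.inr _), j => j ≠ Fin.last H

/-- A matrix for the `d`-th block is admissible when its non-free entries vanish. -/
def Adm {Ds Da : ℕ} {Sset : Fin Ds → Type} {Aset : Fin Da → Type} {H K : ℕ}
    (d : Mode Ds Da) (X : Matrix (Dset Sset Aset H d) (Fin K) ℝ) : Prop :=
  ∀ j k, ¬ FreeIdx d j → X j k = 0

/-- Frobenius norm. -/
def frob {α : Type*} [Fintype α] {K : ℕ} (A : Matrix α (Fin K) ℝ) : ℝ :=
  Real.sqrt (∑ i, ∑ k, (A i k) ^ 2)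

/-- Position of a mode in the block order `d = 1, …, D`. -/
def modeRank {Ds Da : ℕ} : Mode Ds Da → ℕ
  | Sum.inl i => i.val
  | Sum.inr (Sum.inl j) => Ds + j.val
  | Sum.inr (Sum.inr _) => Ds + Da

/-- Partial iterate: blocks strictly before `d` take their new values, block `d` takes
`X`, and blocks after `d` take their old values. -/
def mixAt {Ds Da : ℕ} {Sset : Fin Ds → Type} {Aset : Fin Da → Type} {H K : ℕ}
    (Qnew Qold : Fac Sset Aset H K) (d : Mode Ds Da)
    (X : Matrix (Dset Sset Aset H d) (Fin K) ℝ) : Fac Sset Aset H K :=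
  Function.update (fun m' => if modeRank m' < modeRank d then Qnew m' else Qold m') d X

/-- **Per-block coercivity of the Bellman-error loss under full column rank**: if the
columns of `C̄_d` corresponding to the free entries of the `d`-th factor are linearly
independent, then the map `X ↦ L(Q_1, …, X, …, Q_D)` is coercive in the free entries:
along any sequence of admissible matrices whose Frobenius norm tends to infinity, the
loss tends to infinity. -/
theorem per_block_coercivity_of_loss
    {Ds Da H K : ℕ} {Sset : Fin Ds → Type} {Aset : Fin Da → Type}
    [∀ i, Fintype (Sset i)] [∀ i, DecidableEq (Sset i)]
    [∀ j, Fintype (Aset j)] [∀ j, DecidableEq (Aset j)]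
    (hH : 1 ≤ H) (hK : 1 ≤ K)
    (P : (∀ i, Sset i) → (∀ j, Aset j) → (∀ i, Sset i) → ℝ)
    (hP0 : ∀ s a s', 0 ≤ P s a s') (hP1 : ∀ s a, ∑ s', P s a s' = 1)
    (R : (∀ i, Sset i) → (∀ j, Aset j) → ℝ)
    (π : Fin (H + 1) → (∀ i, Sset i) → (∀ j, Aset j))
    (Q : Fac Sset Aset H K)
    (hQ : ∀ k, Q (tmode Ds Da) (Fin.last H) k = 0)
    (d : Mode Ds Da)
    (hfullrank :
      LinearIndependent ℝ
        (fun p : {jk : Dset Sset Aset H d × Fin K // FreeIdx d jk.1} =>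
          fun row : ((∀ i, Sset i) × (∀ j, Aset j)) × Fin H =>
            Cbar P π Q d row.1.1 row.1.2 row.2 p.1.1 p.1.2))
    (X : ℕ → Matrix (Dset Sset Aset H d) (Fin K) ℝ)
    (hXadm : ∀ n, Adm d (X n))
    (hXnorm : Filter.Tendsto (fun n => frob (X n)) Filter.atTop Filter.atTop) :
    Filter.Tendsto (fun n => Loss P R π (Function.update Q d (X n)))
      Filter.atTop Filter.atTop := by
  classical
  have hHpos : (0 : ℝ) < (H : ℝ) := by exact_mod_cast hH
  -- Step 1: parafac after updating block d is linear in the new block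
  have hpar : ∀ (Y : Matrix (Dset Sset Aset H d) (Fin K) ℝ) (s : ∀ i, Sset i)
      (a : ∀ j, Aset j) (h : Fin (H + 1)),
      parafac (Function.update Q d Y) s a h
        = ∑ q : Dset Sset Aset H d × Fin K, Phi Q d s a h q.1 q.2 * Y q.1 q.2 := by
    intro Y s a h
    rw [parafac, Fintype.sum_prod_type, Finset.sum_comm]
    refine Finset.sum_congr rfl fun k _ => ?_
    rw [← Finset.mul_prod_erase Finset.univ _ (Finset.mem_univ d), Function.update_self]
    have hprod : ∏ m ∈ Finset.univ.erase d,
        (Function.update Q d Y) m (idx s a h m) k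
        = ∏ m ∈ Finset.univ.erase d, Q m (idx s a h m) k :=
      Finset.prod_congr rfl fun m hm => by
        rw [Function.update_of_ne (Finset.ne_of_mem_erase hm)]
    rw [hprod]
    have hterm : ∀ j : Dset Sset Aset H d, Phi Q d s a h j k * Y j k
        = if idx s a h d = j then
            (∏ m ∈ Finset.univ.erase d, Q m (idx s a h m) k) * Y j k else 0 := by
      intro j; rw [Phi]; by_cases hj : idx s a h d = j <;> simp [hj]
    simp only [hterm]
    rw [Finset.sum_ite_eq Finset.univ (idx s a h d)]
    simp [mul_comm]
  -- Step 2: Bellman error is affine in the free entries of the new block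
  have hbe : ∀ n (s : ∀ i, Sset i) (a : ∀ j, Aset j) (h : Fin H),
      bellErr P R π (Function.update Q d (X n)) s a h
        = R s a + ∑ p : {jk : Dset Sset Aset H d × Fin K // FreeIdx d jk.1},
            Cbar P π Q d s a h p.1.1 p.1.2 * X n p.1.1 p.1.2 := by
    intro n s a h
    rw [bellErr]
    simp only [hpar]
    rw [add_sub_assoc]
    congr 1
    have h1 : (∑ s', P s a s' * ∑ q : Dset Sset Aset H d × Fin K,
          Phi Q d s' (π h.succ s') h.succ q.1 q.2 * X n q.1 q.2)
        = ∑ q : Dset Sset Aset H d × Fin K,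
            (∑ s', P s a s' * Phi Q d s' (π h.succ s') h.succ q.1 q.2) * X n q.1 q.2 :=
      calc (∑ s', P s a s' * ∑ q : Dset Sset Aset H d × Fin K,
            Phi Q d s' (π h.succ s') h.succ q.1 q.2 * X n q.1 q.2)
          = ∑ s', ∑ q : Dset Sset Aset H d × Fin K,
              P s a s' * (Phi Q d s' (π h.succ s') h.succ q.1 q.2 * X n q.1 q.2) :=
            Finset.sum_congr rfl fun s' _ => Finset.mul_sum _ _ _
        _ = ∑ q : Dset Sset Aset H d × Fin K, ∑ s',
              P s a s' * (Phi Q d s' (π h.succ s') h.succ q.1 q.2 * X n q.1 q.2) :=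
            Finset.sum_comm
        _ = ∑ q : Dset Sset Aset H d × Fin K,
              (∑ s', P s a s' * Phi Q d s' (π h.succ s') h.succ q.1 q.2) * X n q.1 q.2 :=
            Finset.sum_congr rfl fun q _ => by
              rw [Finset.sum_mul]
              exact Finset.sum_congr rfl fun s' _ => (mul_assoc _ _ _).symm
    rw [h1, ← Finset.sum_sub_distrib]
    have h2 : ∀ q : Dset Sset Aset H d × Fin K,
        (∑ s', P s a s' * Phi Q d s' (π h.succ s') h.succ q.1 q.2) * X n q.1 q.2
          - Phi Q d s a h.castSucc q.1 q.2 * X n q.1 q.2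
        = Cbar P π Q d s a h q.1 q.2 * X n q.1 q.2 := fun q => by
      rw [Cbar, sub_mul]
    simp only [h2]
    rw [← Finset.sum_filter_of_ne
        (p := fun q : Dset Sset Aset H d × Fin K => FreeIdx d q.1)
        (fun q _ hne => by
          by_contra hfree
          exact hne (by rw [hXadm n q.1 q.2 hfree, mul_zero]))]
    exact Finset.sum_subtype _ (fun q => by simp) _
  -- the linear map
  let C : (((∀ i, Sset i) × (∀ j, Aset j)) × Fin H) →
      {jk : Dset Sset Aset H d × Fin K // FreeIdx d jk.1} → ℝ :=
    fun row p => Cbar P π Q d row.1.1 row.1.2 row.2 p.1.1 p.1.2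
  let T : EuclideanSpace ℝ {jk : Dset Sset Aset H d × Fin K // FreeIdx d jk.1} →ₗ[ℝ]
      EuclideanSpace ℝ (((∀ i, Sset i) × (∀ j, Aset j)) × Fin H) :=
    { toFun := fun w => WithLp.toLp 2 (fun row => ∑ p, C row p * w p)
      map_add' := fun x y => by
        ext row
        show ∑ p, C row p * (x p + y p) = (∑ p, C row p * x p) + ∑ p, C row p * y p
        rw [← Finset.sum_add_distrib]
        exact Finset.sum_congr rfl fun p _ => mul_add _ _ _
      map_smul' := fun c x => by
        ext row
        show ∑ p, C row p * (c * x p) = c * ∑ p, C row p * x p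
        rw [Finset.mul_sum]
        exact Finset.sum_congr rfl fun p _ => by ring }
  have hker : LinearMap.ker T = ⊥ := by
    rw [LinearMap.ker_eq_bot']
    intro w hw
    have hli := Fintype.linearIndependent_iff.mp hfullrank w ?_
    · ext p; exact hli p
    · funext row
      have hrow : ∑ p, C row p * w p = 0 := congrArg (fun z : EuclideanSpace ℝ (((∀ i, Sset i) × (∀ j, Aset j)) × Fin H) => z row) hw
      simpa [Finset.sum_apply, mul_comm] using hrow
  obtain ⟨Kc, hKc, hanti⟩ := T.exists_antilipschitzWith hker
  have hTlow : ∀ w, ‖w‖ ≤ (Kc : ℝ) * ‖T w‖ := fun w => by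
    have := hanti.le_mul_dist w 0
    simpa [dist_zero_right, map_zero] using this
  set b : EuclideanSpace ℝ (((∀ i, Sset i) × (∀ j, Aset j)) × Fin H) :=
    WithLp.toLp 2 (fun row => R row.1.1 row.1.2) with hbdef
  set v : ℕ → EuclideanSpace ℝ {jk : Dset Sset Aset H d × Fin K // FreeIdx d jk.1} :=
    fun n => WithLp.toLp 2 (fun p => X n p.1.1 p.1.2) with hvdef
  -- Frobenius norm equals Euclidean norm of the free part
  have hfrob : ∀ n, frob (X n) = ‖v n‖ := by
    intro n
    rw [frob, EuclideanSpace.norm_eq]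
    congr 1
    have hn : ∀ p : {jk : Dset Sset Aset H d × Fin K // FreeIdx d jk.1},
        ‖v n p‖ ^ 2 = X n p.1.1 p.1.2 ^ 2 := fun p => by
      simp [Real.norm_eq_abs, sq_abs, hvdef]
    simp only [hn]
    rw [← Fintype.sum_prod_type (f := fun q : Dset Sset Aset H d × Fin K => X n q.1 q.2 ^ 2)]
    rw [← Finset.sum_filter_of_ne
        (p := fun q : Dset Sset Aset H d × Fin K => FreeIdx d q.1)
        (fun q _ hne => by
          by_contra hfree
          exact hne (by rw [hXadm n q.1 q.2 hfree]; norm_num))]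
    exact Finset.sum_subtype _ (fun q => by simp) _
  have hnormsq : ∀ (w : EuclideanSpace ℝ (((∀ i, Sset i) × (∀ j, Aset j)) × Fin H)),
      ‖w‖ ^ 2 = ∑ row, (w row) ^ 2 := fun w => by
    rw [EuclideanSpace.norm_eq, Real.sq_sqrt (Finset.sum_nonneg fun _ _ => sq_nonneg _)]
    exact Finset.sum_congr rfl fun i _ => by simp [Real.norm_eq_abs, sq_abs]
  -- Loss identity
  have hLoss : ∀ n, Loss P R π (Function.update Q d (X n))
      = (1 / (H : ℝ)) * ‖b + T (v n)‖ ^ 2 := by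
    intro n
    rw [Loss, hnormsq]
    congr 1
    conv_rhs => rw [Fintype.sum_prod_type, Finset.sum_comm]
    refine Finset.sum_congr rfl fun h _ => ?_
    rw [Fintype.sum_prod_type
      (f := fun sa : (∀ i, Sset i) × (∀ j, Aset j) => ((b + T (v n)) (sa, h)) ^ 2)]
    refine Finset.sum_congr rfl fun s _ => Finset.sum_congr rfl fun a _ => ?_
    rw [hbe n s a h]
    rfl
  -- conclude
  set B : ℝ := ‖b‖ with hBdef
  set c : ℝ := ((Kc : ℝ))⁻¹ with hcdef
  have hKcpos : (0 : ℝ) < (Kc : ℝ) := by exact_mod_cast hKc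
  have hcpos : 0 < c := by positivity
  have hlow : ∀ n, c * frob (X n) - B ≤ ‖b + T (v n)‖ := by
    intro n
    have h1 : ‖T (v n)‖ - B ≤ ‖b + T (v n)‖ := by
      have h := norm_sub_norm_le (T (v n)) (-b)
      simpa [sub_neg_eq_add, add_comm] using h
    have h2 : c * ‖v n‖ ≤ ‖T (v n)‖ := by
      rw [hcdef, inv_mul_le_iff₀ hKcpos]
      exact hTlow (v n)
    rw [hfrob]
    linarith
  have hg : Filter.Tendsto (fun n => (1 / (H : ℝ)) * (c * frob (X n) - B))
      Filter.atTop Filter.atTop := by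
    have h1 : Filter.Tendsto (fun n => c * frob (X n)) Filter.atTop Filter.atTop :=
      hXnorm.const_mul_atTop hcpos
    have h2 : Filter.Tendsto (fun n => c * frob (X n) - B) Filter.atTop Filter.atTop := by
      simpa [sub_eq_add_neg] using Filter.tendsto_atTop_add_const_right Filter.atTop (-B) h1
    exact h2.const_mul_atTop (by positivity)
  refine Filter.tendsto_atTop_mono' _ ?_ hg
  have hev : ∀ᶠ n in Filter.atTop, (1 + B) / c ≤ frob (X n) :=
    hXnorm.eventually_ge_atTop _
  filter_upwards [hev] with n hn
  have hone : 1 ≤ c * frob (X n) - B := by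
    have : 1 + B ≤ c * frob (X n) := by
      have := mul_le_mul_of_nonneg_left hn hcpos.le
      rwa [mul_div_cancel₀ _ (ne_of_gt hcpos)] at this
    linarith
  rw [hLoss n]
  have h1 := hlow n
  have h2 : (c * frob (X n) - B) ≤ ‖b + T (v n)‖ ^ 2 := by nlinarith
  have h3 : 0 ≤ 1 / (H : ℝ) := by positivity
  exact mul_le_mul_of_nonneg_left h2 h3

end

end FHMDP
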